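/- arXiv:1712.08784 — 2 statements merged into one kernel-verified Lean document; each statement's English description precedes it below -/
import Mathlib

section
/- Let N be Poisson with mean μ > 0 and let X₁, X₂, ... be i.i.d. random variables in [0,1] with mean m = E[X₁] > 0, independent of N. Then E[∏_{i=1}^{N−1} X_i | N > 0] = (exp(μm) − 1)·exp(−μ)/(m·(1 − exp(−μ))). -/
open MeasureTheory ProbabilityTheory Real
open scoped ENNReal ProbabilityTheory

lemma aux_exp_tsum (x : ℝ) : ∑' k : ℕ, x ^ k / (k.factorial : ℝ) = Real.exp x := by
  rw [Real.exp_eq_exp_ℝ, NormedSpace.exp_eq_tsum_div]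

lemma aux_exp_tail (x : ℝ) :
    ∑' k : ℕ, x ^ (k + 1) / ((k + 1).factorial : ℝ) = Real.exp x - 1 := by
  have hs := Real.summable_pow_div_factorial x
  have h := Summable.tsum_eq_zero_add hs
  rw [aux_exp_tsum x] at h
  simp only [pow_zero, Nat.factorial_zero, Nat.cast_one, div_one] at h
  linarith

/-- Replace a function to `ℕ` whose fibers have prescribed total measure one
by a genuinely measurable a.e.-equal function with the same fiber measures. -/
lemma aux_exists_measurable {Ω : Type*} [MeasureSpace Ω]
    [IsProbabilityMeasure (ℙ : Measure Ω)] (N : Ω → ℕ) (P : ℕ → ℝ≥0∞)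
    (hN : ∀ k, ℙ {ω | N ω = k} = P k) (hsum : ∑' k, P k = 1) :
    ∃ g : Ω → ℕ, Measurable g ∧ g =ᵐ[ℙ] N ∧ ∀ k, ℙ {ω | g ω = k} = P k := by
  have hPle : ∀ k, P k ≤ 1 := fun k => by rw [← hN k]; exact prob_le_one
  -- the measurable core of each fiber
  set C : ℕ → Set Ω := fun k => (toMeasurable ℙ {ω | N ω = k}ᶜ)ᶜ with hC
  have hCm : ∀ k, MeasurableSet (C k) := fun k =>
    (measurableSet_toMeasurable _ _).compl
  have hCsub : ∀ k, C k ⊆ {ω | N ω = k} := fun k => by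
    rw [hC]
    simpa using Set.compl_subset_compl.2 (subset_toMeasurable ℙ {ω | N ω = k}ᶜ)
  have hcomplle : ∀ k, ℙ ({ω | N ω = k}ᶜ) ≤ 1 - P k := by
    intro k
    have hsub : {ω | N ω = k}ᶜ ⊆ ⋃ j, (if j = k then (∅ : Set Ω) else {ω | N ω = j}) := by
      intro ω hω
      refine Set.mem_iUnion.2 ⟨N ω, ?_⟩
      rw [if_neg (by simpa using hω)]
      exact rfl
    refine (measure_mono hsub).trans ((measure_iUnion_le _).trans ?_)
    have heq : ∀ j, ℙ (if j = k then (∅ : Set Ω) else {ω | N ω = j}) =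
        if j = k then 0 else P j := by
      intro j; split <;> simp [hN]
    rw [tsum_congr heq]
    have h2 := ENNReal.tsum_eq_add_tsum_ite (f := P) k
    rw [hsum] at h2
    have h3 : (∑' x, if x = k then 0 else P x) = 1 - P k :=
      ENNReal.eq_sub_of_add_eq ((hPle k).trans_lt ENNReal.one_lt_top).ne
        (by rw [add_comm]; convert h2.symm using 2; exact tsum_congr fun x => by congr)
    exact le_of_eq h3
  have hCge : ∀ k, P k ≤ ℙ (C k) := by
    intro k
    have h1 : ℙ (C k) = 1 - ℙ (toMeasurable ℙ {ω | N ω = k}ᶜ) := by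
      rw [measure_compl (measurableSet_toMeasurable _ _) (measure_ne_top _ _), measure_univ]
    have h2 : ℙ (toMeasurable ℙ {ω | N ω = k}ᶜ) ≤ 1 - P k := by
      rw [measure_toMeasurable]; exact hcomplle k
    calc P k = 1 - (1 - P k) := (ENNReal.sub_sub_cancel ENNReal.one_ne_top (hPle k)).symm
    _ ≤ 1 - ℙ (toMeasurable ℙ {ω | N ω = k}ᶜ) := tsub_le_tsub_left h2 1
    _ = ℙ (C k) := h1.symm
  have hCk : ∀ k, ℙ (C k) = P k := fun k =>
    le_antisymm (by rw [← hN k]; exact measure_mono (hCsub k)) (hCge k)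
  have hdisj : Pairwise (Function.onFun Disjoint C) := by
    intro i j hij
    refine Set.disjoint_left.2 fun ω hi hj => hij ?_
    have := hCsub i hi; have := hCsub j hj
    simp only [Set.mem_setOf_eq] at *
    omega
  have hU : ℙ (⋃ k, C k) = 1 := by
    refine le_antisymm prob_le_one ?_
    rw [measure_iUnion hdisj hCm]
    calc (1 : ℝ≥0∞) = ∑' k, P k := hsum.symm
    _ ≤ ∑' k, ℙ (C k) := ENNReal.tsum_le_tsum hCge
  set T : Set Ω := (⋃ k, C k)ᶜ with hTdef
  have hTm : MeasurableSet T := (MeasurableSet.iUnion hCm).compl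
  have hT : ℙ T = 0 := by
    rw [hTdef, measure_compl (MeasurableSet.iUnion hCm) (measure_ne_top _ _), hU, measure_univ,
      tsub_self]
  classical
  set g : Ω → ℕ := fun ω => if ω ∈ T then 0 else N ω with hg
  have hfib : ∀ k, {ω | g ω = k} = C k ∪ (if k = 0 then T else ∅) := by
    intro k
    ext ω
    by_cases hω : ω ∈ T
    · have hgω : g ω = 0 := if_pos hω
      have hωC : ∀ j, ω ∉ C j := fun j hj => hω (Set.mem_iUnion.2 ⟨j, hj⟩)
      simp only [Set.mem_setOf_eq, hgω, Set.mem_union]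
      constructor
      · rintro rfl; simp [hω]
      · rintro (h | h)
        · exact absurd h (hωC k)
        · by_contra hk
          rw [if_neg (Ne.symm hk)] at h
          exact h
    · have hgω : g ω = N ω := if_neg hω
      obtain ⟨j, hj⟩ := Set.mem_iUnion.1 (not_not.1 hω)
      have hNω : N ω = j := hCsub j hj
      simp only [Set.mem_setOf_eq, hgω, hNω, Set.mem_union]
      constructor
      · rintro rfl; exact Or.inl hj
      · rintro (h | h)
        · exact ((hCsub k h).symm.trans hNω).symm
        · exfalso
          by_cases hk : k = 0
          · rw [if_pos hk] at h; exact hω h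
          · rw [if_neg hk] at h; exact h
  refine ⟨g, ?_, ?_, ?_⟩
  · refine measurable_to_countable' fun k => ?_
    have : g ⁻¹' {k} = {ω | g ω = k} := by ext ω; simp
    rw [this, hfib k]
    refine (hCm k).union ?_
    split
    · exact hTm
    · exact MeasurableSet.empty
  · refine (measure_mono_null ?_ hT : ℙ {ω | g ω ≠ N ω} = 0)
    intro ω hω
    by_contra hωT
    exact hω (if_neg hωT)
  · intro k
    rw [hfib k]
    refine le_antisymm ?_ ?_
    · refine (measure_union_le _ _).trans ?_
      have : ℙ (if k = 0 then T else (∅ : Set Ω)) = 0 := by split <;> simp [hT]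
      rw [hCk k, this, add_zero]
    · rw [← hCk k]; exact measure_mono Set.subset_union_left

noncomputable section

/-- For `N ~ Poisson(μ)` and i.i.d. `[0,1]`-valued `X i` with mean `m > 0`, independent
of `N`: `E[∏_{i=1}^{N−1} X_i | N > 0] = (exp(μm) − 1) exp(−μ)/(m (1 − exp(−μ)))`. -/
theorem poisson_product_conditional {Ω : Type*} [MeasureSpace Ω]
    [IsProbabilityMeasure (ℙ : Measure Ω)]
    (μ m : ℝ) (hμ : 0 < μ)
    (N : Ω → ℕ) (X : ℕ → Ω → ℝ)
    (hN : ∀ k : ℕ, ℙ {ω | N ω = k} =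
      ENNReal.ofReal (Real.exp (-μ) * μ ^ k / (k.factorial : ℝ)))
    (hrange : ∀ i ω, X i ω ∈ Set.Icc (0:ℝ) 1)
    (hiid : iIndepFun X ℙ)
    (hident : ∀ i, Measure.map (X i) ℙ = Measure.map (X 0) ℙ)
    (hm : m = ∫ ω, X 0 ω ∂ℙ) (hmpos : 0 < m)
    (hNind : IndepFun N (fun ω i => X i ω) ℙ) :
    ∫ ω, (∏ i ∈ Finset.range (N ω - 1), X i ω) ∂(ℙ[|{ω | 0 < N ω}]) =
      (Real.exp (μ * m) - 1) * Real.exp (-μ) / (m * (1 - Real.exp (-μ))) := by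
  -- the Poisson weights
  set p : ℕ → ℝ := fun k => Real.exp (-μ) * μ ^ k / (k.factorial : ℝ) with hp
  have hppos : ∀ k, 0 < p k := fun k => by
    apply div_pos (mul_pos (Real.exp_pos _) (pow_pos hμ _))
    exact_mod_cast Nat.factorial_pos k
  have hpsum : Summable p := by
    have := (Real.summable_pow_div_factorial μ).mul_left (Real.exp (-μ))
    simpa [hp, mul_div_assoc] using this
  have hptot : ∑' k, p k = 1 := by
    rw [hp]
    simp only [mul_div_assoc]
    rw [tsum_mul_left, aux_exp_tsum, ← Real.exp_add]
    simp
  set P : ℕ → ℝ≥0∞ := fun k => ENNReal.ofReal (p k) with hP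
  have hPsum : ∑' k, P k = 1 := by
    rw [hP, ← ENNReal.ofReal_tsum_of_nonneg (fun k => (hppos k).le) hpsum, hptot,
      ENNReal.ofReal_one]
  -- a measurable version `g` of `N`
  obtain ⟨g, hgmeas, hgN, hgk⟩ := aux_exists_measurable N P hN hPsum
  -- a.e. measurability of the `X i`, and measurable `[0,1]`-valued versions `Y i`
  have hint0 : Integrable (X 0) ℙ := by
    by_contra h
    rw [integral_undef h] at hm
    exact absurd hm (by linarith)
  have haeX : ∀ i, AEMeasurable (X i) ℙ := by
    intro i
    by_contra h
    have h0 : Measure.map (X i) ℙ = 0 := Measure.map_of_not_aemeasurable h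
    have hpm : IsProbabilityMeasure (Measure.map (X 0) ℙ) :=
      Measure.isProbabilityMeasure_map hint0.aemeasurable
    rw [hident i] at h0
    have := hpm.ne_zero
    exact this h0
  set Y : ℕ → Ω → ℝ := fun i ω => max 0 (min ((haeX i).mk (X i) ω) 1) with hY
  have hYmeas : ∀ i, Measurable (Y i) := fun i =>
    measurable_const.max (((haeX i).measurable_mk).min measurable_const)
  have hYrange : ∀ i ω, Y i ω ∈ Set.Icc (0:ℝ) 1 := fun i ω =>
    ⟨le_max_left _ _, max_le (by norm_num) (min_le_right _ _)⟩
  have hYX : ∀ i, Y i =ᵐ[ℙ] X i := by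
    intro i
    filter_upwards [(haeX i).ae_eq_mk] with ω h
    rw [hY]
    simp only [← h]
    rw [min_eq_left (hrange i ω).2, max_eq_right (hrange i ω).1]
  have hYXall : ∀ᵐ ω ∂ℙ, ∀ i, Y i ω = X i ω := ae_all_iff.2 fun i => hYX i
  -- the `Y i` are i.i.d. as well
  have hYind : iIndepFun Y ℙ := by
    rw [iIndepFun_iff_measure_inter_preimage_eq_mul]
    intro S sets hsets
    have h1 : ∀ i, ℙ (Y i ⁻¹' sets i) = ℙ (X i ⁻¹' sets i) := by
      intro i
      refine measure_congr (Filter.eventuallyEq_set.2 ?_)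
      filter_upwards [hYX i] with ω h
      simp [Set.mem_preimage, h]
    have h2 : ℙ (⋂ i ∈ S, Y i ⁻¹' sets i) = ℙ (⋂ i ∈ S, X i ⁻¹' sets i) := by
      refine measure_congr (Filter.eventuallyEq_set.2 ?_)
      filter_upwards [hYXall] with ω h
      simp only [Set.mem_iInter, Set.mem_preimage, h]
    rw [h2, hiid.measure_inter_preimage_eq_mul S hsets]
    exact Finset.prod_congr rfl fun i _ => (h1 i).symm
  -- expectations of the `Y i`
  have hEY : ∀ i, ∫ ω, Y i ω ∂ℙ = m := by
    intro i
    rw [integral_congr_ae (hYX i)]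
    have h1 : ∫ ω, X i ω ∂ℙ = ∫ x, x ∂(Measure.map (X i) ℙ) :=
      (integral_map (haeX i) aestronglyMeasurable_id).symm
    have h2 : ∫ x, x ∂(Measure.map (X 0) ℙ) = ∫ ω, X 0 ω ∂ℙ :=
      integral_map (haeX 0) aestronglyMeasurable_id
    rw [h1, hident i, h2, ← hm]
  -- expectation of finite products
  have hprodY : ∀ k, ∫ ω, ∏ i ∈ Finset.range k, Y i ω ∂ℙ = m ^ k := by
    intro k
    induction k with
    | zero => simp
    | succ n ih =>
      have hind := hYind.indepFun_prod_range_succ hYmeas n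
      have hmeasprod : Measurable (∏ j ∈ Finset.range n, Y j) := by
        have h : (∏ j ∈ Finset.range n, Y j) = fun a => ∏ j ∈ Finset.range n, Y j a :=
          funext fun a => Finset.prod_apply a (Finset.range n) Y
        rw [h]
        exact Finset.measurable_prod _ fun i _ => hYmeas i
      calc ∫ ω, ∏ i ∈ Finset.range (n+1), Y i ω ∂ℙ
          = ∫ ω, (∏ j ∈ Finset.range n, Y j) ω * Y n ω ∂ℙ := by
            refine integral_congr_ae (Filter.Eventually.of_forall fun ω => ?_)
            simp [Finset.prod_range_succ]
        _ = (∫ ω, (∏ j ∈ Finset.range n, Y j) ω ∂ℙ) * ∫ ω, Y n ω ∂ℙ :=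
            hind.integral_mul_eq_mul_integral hmeasprod.aestronglyMeasurable
              (hYmeas n).aestronglyMeasurable
        _ = m ^ n * m := by
            rw [hEY n]
            congr 1
            rw [← ih]
            refine integral_congr_ae (Filter.Eventually.of_forall fun ω => ?_)
            simp
        _ = m ^ (n + 1) := by ring
  -- the measurable product function
  set F : Ω → ℝ := fun ω => ∏ i ∈ Finset.range (g ω - 1), Y i ω with hF
  have hFmeas : Measurable F := by
    have h1 : Measurable fun q : Ω × ℕ => ∏ i ∈ Finset.range (q.2 - 1), Y i q.1 := by
      refine measurable_from_prod_countable_left fun n => ?_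
      show Measurable fun x : Ω => ∏ i ∈ Finset.range (n - 1), Y i x
      exact Finset.measurable_prod _ fun i _ => hYmeas i
    exact h1.comp (measurable_id.prodMk hgmeas)
  have hFrange : ∀ ω, F ω ∈ Set.Icc (0:ℝ) 1 := fun ω =>
    ⟨Finset.prod_nonneg fun i _ => (hYrange i ω).1,
     Finset.prod_le_one (fun i _ => (hYrange i ω).1) fun i _ => (hYrange i ω).2⟩
  have hFint : Integrable F ℙ := by
    refine (integrable_const (1:ℝ)).mono' hFmeas.aestronglyMeasurable ?_
    refine Filter.Eventually.of_forall fun ω => ?_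
    rw [Real.norm_eq_abs, abs_of_nonneg (hFrange ω).1]
    exact (hFrange ω).2
  -- independence of `g` and the sequence `Y`
  have hYseqmeas : Measurable (fun ω i => Y i ω) :=
    measurable_pi_lambda _ fun i => hYmeas i
  have hIndgY : IndepFun g (fun ω i => Y i ω) ℙ := by
    refine hNind.congr hgN.symm ?_
    filter_upwards [hYXall] with ω h
    exact funext fun i => (h i).symm
  -- measurability of the fibers of g
  have hfibm : ∀ k, MeasurableSet {ω | g ω = k} := by
    intro k
    exact hgmeas (measurableSet_singleton k)
  -- the per-fiber integrals
  have hterm : ∀ k : ℕ, ∫ ω in {ω | g ω = k + 1}, F ω ∂ℙ = p (k+1) * m ^ k := by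
    intro k
    set φ : ℕ → ℝ := fun n => if n = k + 1 then (1:ℝ) else 0 with hφdef
    set ψ : (ℕ → ℝ) → ℝ := fun x => ∏ i ∈ Finset.range k, x i with hψdef
    have hφ : Measurable φ := measurable_from_top
    have hψ : Measurable ψ := Finset.measurable_prod _ fun i _ => measurable_pi_apply i
    have step1 : ∫ ω in {ω | g ω = k + 1}, F ω ∂ℙ =
        ∫ ω in {ω | g ω = k + 1}, ∏ i ∈ Finset.range k, Y i ω ∂ℙ := by
      refine setIntegral_congr_fun (hfibm (k+1)) fun ω hω => ?_
      have hgg : g ω = k + 1 := hω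
      simp only [hF, hgg, Nat.add_sub_cancel]
    have step2 : ∫ ω in {ω | g ω = k + 1}, ∏ i ∈ Finset.range k, Y i ω ∂ℙ =
        ∫ ω, (fun ω => φ (g ω) * ψ (fun i => Y i ω)) ω ∂ℙ := by
      rw [← integral_indicator (hfibm (k+1))]
      refine integral_congr_ae (Filter.Eventually.of_forall fun ω => ?_)
      by_cases hω : g ω = k + 1
      · simp [Set.indicator_apply, Set.mem_setOf_eq, hφdef, hψdef, hω]
      · simp [Set.indicator_apply, Set.mem_setOf_eq, hφdef, hψdef, hω]
    have hIndcomp : IndepFun (φ ∘ g) (ψ ∘ fun ω i => Y i ω) ℙ := hIndgY.comp hφ hψ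
    have step3 : ∫ ω, (fun ω => φ (g ω) * ψ (fun i => Y i ω)) ω ∂ℙ =
        (∫ ω, φ (g ω) ∂ℙ) * ∫ ω, ψ (fun i => Y i ω) ∂ℙ :=
      hIndcomp.integral_mul_eq_mul_integral (hφ.comp hgmeas).aestronglyMeasurable
        (hψ.comp hYseqmeas).aestronglyMeasurable
    have step4 : ∫ ω, φ (g ω) ∂ℙ = p (k+1) := by
      have hind : (fun ω => φ (g ω)) = Set.indicator {ω | g ω = k + 1} (1 : Ω → ℝ) := by
        funext ω
        by_cases hω : g ω = k + 1
        · simp [Set.indicator_apply, Set.mem_setOf_eq, hφdef, hω]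
        · simp [Set.indicator_apply, Set.mem_setOf_eq, hφdef, hω]
      rw [hind, integral_indicator_one (hfibm (k+1)), measureReal_def, hgk (k+1), hP,
        ENNReal.toReal_ofReal (hppos (k+1)).le]
    have step5 : ∫ ω, ψ (fun i => Y i ω) ∂ℙ = m ^ k := hprodY k
    rw [step1, step2, step3, step4, step5]
  -- the event `{0 < g}`
  set s : Set Ω := {ω | 0 < g ω} with hs
  have hscompl : s = {ω | g ω = 0}ᶜ := by
    ext ω; simp [hs, Nat.pos_iff_ne_zero]
  have hsm : MeasurableSet s := by rw [hscompl]; exact (hfibm 0).compl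
  have hsU : s = ⋃ k : ℕ, {ω | g ω = k + 1} := by
    ext ω
    simp only [hs, Set.mem_setOf_eq, Set.mem_iUnion]
    constructor
    · intro h
      exact ⟨g ω - 1, by omega⟩
    · rintro ⟨k, hk⟩; omega
  have hsmeasure : ℙ s = ENNReal.ofReal (1 - Real.exp (-μ)) := by
    rw [hscompl, measure_compl (hfibm 0) (measure_ne_top _ _), measure_univ, hgk 0]
    have hp0 : p 0 = Real.exp (-μ) := by simp [hp]
    rw [hP]
    simp only [hp0]
    rw [ENNReal.ofReal_sub _ (Real.exp_nonneg _), ENNReal.ofReal_one]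
  -- the set integral over s
  have hsint : ∫ ω in s, F ω ∂ℙ = (Real.exp (-μ) / m) * (Real.exp (μ * m) - 1) := by
    have hdisj : Pairwise (Function.onFun Disjoint fun k : ℕ => {ω | g ω = k + 1}) := by
      intro i j hij
      refine Set.disjoint_left.2 fun ω hi hj => hij ?_
      simp only [Set.mem_setOf_eq] at hi hj
      omega
    rw [hsU, integral_iUnion (fun k => hfibm (k+1)) hdisj (hFint.integrableOn)]
    rw [tsum_congr hterm]
    have hpt : ∀ k : ℕ, p (k+1) * m ^ k =
        (Real.exp (-μ) / m) * ((μ * m) ^ (k+1) / (((k+1).factorial : ℕ) : ℝ)) := by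
      intro k
      rw [hp]
      simp only
      rw [mul_pow]
      field_simp
      ring
    rw [tsum_congr hpt, tsum_mul_left, aux_exp_tail]
  -- identify the conditional measure
  have hseq : {ω | 0 < N ω} =ᵐ[ℙ] s := by
    refine Filter.eventuallyEq_set.2 ?_
    filter_upwards [hgN] with ω h
    simp [hs, ← h]
  have hcond_eq : (ℙ[|{ω | 0 < N ω}]) = ℙ[|s] := by
    rw [ProbabilityTheory.cond, ProbabilityTheory.cond, measure_congr hseq,
      Measure.restrict_congr_set hseq]
  have haeF : (fun ω => ∏ i ∈ Finset.range (N ω - 1), X i ω) =ᵐ[ℙ] F := by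
    filter_upwards [hgN, hYXall] with ω h1 h2
    rw [hF]
    simp only [← h1]
    exact Finset.prod_congr rfl fun i _ => (h2 i).symm
  have haeFcond : (fun ω => ∏ i ∈ Finset.range (N ω - 1), X i ω) =ᵐ[ℙ[|s]] F := by
    rw [ProbabilityTheory.cond]
    exact Measure.ae_smul_measure (ae_restrict_of_ae haeF) _
  -- final computation
  have hexplt : Real.exp (-μ) < 1 := by
    rw [← Real.exp_zero]
    exact Real.exp_lt_exp.2 (by linarith)
  calc ∫ ω, (∏ i ∈ Finset.range (N ω - 1), X i ω) ∂(ℙ[|{ω | 0 < N ω}])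
      = ∫ ω, (∏ i ∈ Finset.range (N ω - 1), X i ω) ∂(ℙ[|s]) := by rw [hcond_eq]
    _ = ∫ ω, F ω ∂(ℙ[|s]) := integral_congr_ae haeFcond
    _ = (ℙ s)⁻¹.toReal * ∫ ω in s, F ω ∂ℙ := by
        rw [ProbabilityTheory.cond, integral_smul_measure, smul_eq_mul]
    _ = (1 - Real.exp (-μ))⁻¹ * ((Real.exp (-μ) / m) * (Real.exp (μ * m) - 1)) := by
        rw [hsint, hsmeasure, ← ENNReal.ofReal_inv_of_pos (by linarith),
          ENNReal.toReal_ofReal (inv_nonneg.2 (by linarith))]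
    _ = (Real.exp (μ * m) - 1) * Real.exp (-μ) / (m * (1 - Real.exp (-μ))) := by
        field_simp

end
end

section
/- For d ≤ D, the region b(x₀, D) with ‖x₀‖ = d is contained in the union of the half-disk of radius d + D and the half-disk of radius √(D² − d²), both centered at the origin, where the half-disk of radius d + D lies on the side of the line through the origin perpendicular to x₀ containing x₀. -/
open MeasureTheory Real

noncomputable section

abbrev E2 := EuclideanSpace ℝ (Fin 2)

theorem disk_subset_two_half_disks (D d : ℝ) (x₀ : E2)
    (hx : ‖x₀‖ = d) (hd : 0 ≤ d) (hdD : d ≤ D) :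
    Metric.closedBall x₀ D ⊆
      {y : E2 | ‖y‖ ≤ d + D ∧ 0 ≤ (inner ℝ y x₀ : ℝ)} ∪
      {y : E2 | ‖y‖ ≤ Real.sqrt (D ^ 2 - d ^ 2) ∧ (inner ℝ y x₀ : ℝ) ≤ 0} := by
  intro y hy
  rw [Metric.mem_closedBall, dist_eq_norm] at hy
  rcases le_or_gt 0 (inner ℝ y x₀ : ℝ) with h | h
  · left
    refine ⟨?_, h⟩
    calc ‖y‖ = ‖(y - x₀) + x₀‖ := by rw [sub_add_cancel]
      _ ≤ ‖y - x₀‖ + ‖x₀‖ := norm_add_le _ _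
      _ ≤ D + d := add_le_add hy (le_of_eq hx)
      _ = d + D := by ring
  · right
    refine ⟨?_, h.le⟩
    have hsq : ‖y - x₀‖ ^ 2 = ‖y‖ ^ 2 - 2 * (inner ℝ y x₀ : ℝ) + ‖x₀‖ ^ 2 :=
      norm_sub_sq_real y x₀
    have hD0 : (0:ℝ) ≤ D := hd.trans hdD
    have h1 : ‖y - x₀‖ ^ 2 ≤ D ^ 2 := by nlinarith [norm_nonneg (y - x₀)]
    rw [show D ^ 2 - d ^ 2 = ‖y‖^2 + (D^2 - ‖y - x₀‖^2 - 2*(inner ℝ y x₀ : ℝ)) by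
      rw [hsq] at h1 ⊢; nlinarith]
    calc ‖y‖ = Real.sqrt (‖y‖ ^ 2) := by
          rw [Real.sqrt_sq (norm_nonneg y)]
      _ ≤ _ := Real.sqrt_le_sqrt (by nlinarith)
end
end
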